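/- Let $\rho$ be a density matrix on an $n$-dimensional Hilbert space with eigenbasis $\mathcal{B}_\rho = (\ket{f_k})$, and let $\mathcal{B} = (\ket{e_i})$ be any orthonormal basis. Then $\sum_{i\ne j}|\langle e_i|\rho\, e_j\rangle|^2 \le d(\mathcal{B}_\rho, \mathcal{B})^2$, where $d(\mathcal{B}_\rho,\mathcal{B})^2 = \sum_{i,k}|\langle e_i|f_k\rangle|^2(1-|\langle e_i|f_k\rangle|^2)$. -/

import Mathlib

open scoped BigOperators InnerProductSpace

private lemma parseval_aux {n : ℕ} (b : OrthonormalBasis (Fin n) ℂ (EuclideanSpace ℂ (Fin n)))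
    (x : EuclideanSpace ℂ (Fin n)) : ∑ i, ‖⟪b i, x⟫_ℂ‖ ^ 2 = ‖x‖ ^ 2 := by
  rw [← b.repr.norm_map x, EuclideanSpace.norm_eq, Real.sq_sqrt (by positivity)]
  simp [b.repr_apply_apply]

/-- **`η₂ ≤ δ`:** for a density matrix `ρ = ∑ₖ λₖ|fₖ⟩⟨fₖ|` with eigenbasis `(fₖ)` and any
orthonormal basis `(eᵢ)`, the squared `l²`-coherence `∑_{i≠j} |⟨eᵢ|ρ eⱼ⟩|²` is at most the
squared basis distance `d(B_ρ, B)² = ∑_{i,k} |⟨eᵢ|fₖ⟩|²(1-|⟨eᵢ|fₖ⟩|²)`. -/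
theorem stmt_5 (n : ℕ)
    (lam : Fin n → ℝ) (hlam : ∀ k, 0 ≤ lam k) (hsum : ∑ k, lam k = 1)
    (e f : OrthonormalBasis (Fin n) ℂ (EuclideanSpace ℂ (Fin n)))
    (ρ : EuclideanSpace ℂ (Fin n) →ₗ[ℂ] EuclideanSpace ℂ (Fin n))
    (hρ : ∀ x, ρ x = ∑ k, ((lam k : ℂ) * ⟪f k, x⟫_ℂ) • f k) :
    (∑ i, ∑ j, if i = j then 0 else ‖⟪e i, ρ (e j)⟫_ℂ‖ ^ 2) ≤
      ∑ i, ∑ k, ‖⟪e i, f k⟫_ℂ‖ ^ 2 * (1 - ‖⟪e i, f k⟫_ℂ‖ ^ 2) := by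
  set p : Fin n → Fin n → ℝ := fun i k => ‖⟪e i, f k⟫_ℂ‖ ^ 2 with hp
  have hp0 : ∀ i k, 0 ≤ p i k := fun i k => by positivity
  have hprow : ∀ i, ∑ k, p i k = 1 := by
    intro i
    have : ∀ k, p i k = ‖⟪f k, e i⟫_ℂ‖ ^ 2 := fun k => by
      rw [hp]; rw [← norm_inner_symm]
    simp_rw [this]
    rw [parseval_aux f (e i)]
    simp [e.orthonormal.1 i]
  have hp1 : ∀ i k, p i k ≤ 1 := by
    intro i k
    rw [← hprow i]
    exact Finset.single_le_sum (fun k _ => hp0 i k) (Finset.mem_univ k)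
  have hlam1 : ∀ k, lam k ≤ 1 := by
    intro k
    rw [← hsum]
    exact Finset.single_le_sum (fun k _ => hlam k) (Finset.mem_univ k)
  -- matrix entries
  have hent : ∀ i j, ⟪e i, ρ (e j)⟫_ℂ =
      ∑ k, ((lam k : ℂ) * ⟪f k, e j⟫_ℂ) * ⟪e i, f k⟫_ℂ := by
    intro i j
    rw [hρ, inner_sum]
    simp [inner_smul_right]
  -- the auxiliary vectors x i with ⟪x i, e j⟫ = ρ_ij
  have hx : ∀ i j, ⟪e i, ρ (e j)⟫_ℂ =
      ⟪∑ k, ((lam k : ℂ) * (starRingEnd ℂ) ⟪e i, f k⟫_ℂ) • f k, e j⟫_ℂ := by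
    intro i j
    rw [hent, sum_inner]
    refine Finset.sum_congr rfl fun k _ => ?_
    rw [inner_smul_left]
    rw [map_mul, Complex.conj_conj, Complex.conj_ofReal]
    ring
  -- row sums of |ρ_ij|²
  have hrow : ∀ i, ∑ j, ‖⟪e i, ρ (e j)⟫_ℂ‖ ^ 2 = ∑ k, lam k ^ 2 * p i k := by
    intro i
    have h1 : ∀ j, ‖⟪e i, ρ (e j)⟫_ℂ‖ ^ 2 =
        ‖⟪e j, ∑ k, ((lam k : ℂ) * (starRingEnd ℂ) ⟪e i, f k⟫_ℂ) • f k⟫_ℂ‖ ^ 2 := by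
      intro j; rw [hx i j, ← norm_inner_symm]
    simp_rw [h1]
    rw [parseval_aux e]
    rw [← parseval_aux f]
    refine Finset.sum_congr rfl fun k _ => ?_
    rw [f.orthonormal.inner_right_fintype]
    rw [norm_mul, mul_pow, RCLike.norm_conj, Complex.norm_real, Real.norm_eq_abs,
      abs_of_nonneg (hlam k), hp]
  -- diagonal entries
  have hdiag : ∀ i, ⟪e i, ρ (e i)⟫_ℂ = ((∑ k, lam k * p i k : ℝ) : ℂ) := by
    intro i
    rw [hent]
    push_cast
    refine Finset.sum_congr rfl fun k _ => ?_
    rw [← inner_conj_symm (e i) (f k)]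
    rw [hp]
    rw [mul_assoc, Complex.mul_conj]
    norm_cast
    simp only [hp]
    rw [Complex.normSq_eq_norm_sq, ← norm_inner_symm]
  have hdiagsq : ∀ i, ‖⟪e i, ρ (e i)⟫_ℂ‖ ^ 2 = (∑ k, lam k * p i k) ^ 2 := by
    intro i
    rw [hdiag, Complex.norm_real, Real.norm_eq_abs, sq_abs]
  -- split off diagonal
  have hsplit : ∀ i, (∑ j, if i = j then 0 else ‖⟪e i, ρ (e j)⟫_ℂ‖ ^ 2)
      = (∑ j, ‖⟪e i, ρ (e j)⟫_ℂ‖ ^ 2) - ‖⟪e i, ρ (e i)⟫_ℂ‖ ^ 2 := by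
    intro i
    have hdd : ‖⟪e i, ρ (e i)⟫_ℂ‖ ^ 2 = ∑ j, if i = j then ‖⟪e i, ρ (e j)⟫_ℂ‖ ^ 2 else 0 := by
      simp
    rw [eq_sub_iff_add_eq, hdd, ← Finset.sum_add_distrib]
    refine Finset.sum_congr rfl fun j _ => ?_
    by_cases h : i = j <;> simp [h]
  calc (∑ i, ∑ j, if i = j then 0 else ‖⟪e i, ρ (e j)⟫_ℂ‖ ^ 2)
      = ∑ i, ((∑ k, lam k ^ 2 * p i k) - (∑ k, lam k * p i k) ^ 2) := by
        refine Finset.sum_congr rfl fun i _ => ?_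
        rw [hsplit, hrow, hdiagsq]
    _ ≤ ∑ i, ∑ k, p i k * (1 - p i k) := by
        refine Finset.sum_le_sum fun i _ => ?_
        have h2 : ∑ k, (lam k * p i k) ^ 2 ≤ (∑ k, lam k * p i k) ^ 2 :=
          Finset.sum_sq_le_sq_sum_of_nonneg fun k _ => mul_nonneg (hlam k) (hp0 i k)
        have h3 : (∑ k, lam k ^ 2 * p i k) - (∑ k, lam k * p i k) ^ 2
            ≤ ∑ k, (lam k ^ 2 * p i k - (lam k * p i k) ^ 2) := by
          rw [Finset.sum_sub_distrib]
          linarith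
        refine h3.trans (Finset.sum_le_sum fun k _ => ?_)
        have : lam k ^ 2 * p i k - (lam k * p i k) ^ 2 = lam k ^ 2 * (p i k * (1 - p i k)) := by
          ring
        rw [this]
        have hnn : 0 ≤ p i k * (1 - p i k) :=
          mul_nonneg (hp0 i k) (by linarith [hp1 i k])
        have hsq : lam k ^ 2 ≤ 1 := by nlinarith [hlam k, hlam1 k]
        exact mul_le_of_le_one_left hnn hsq
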